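/- Let d > 4 be even, let s > 2, and assume s·(d/2) is even. Then there exist permutations γ₁, …, γ_s and α of Fin d such that each γᵢ is a fixed-point-free involution (γᵢ ∘ γᵢ = id and γᵢ x ≠ x for all x, i.e. cycle type [2,…,2]), α² · γ₁ · γ₂ ⋯ γ_s = 1, and the subgroup of the symmetric group generated by {α, γ₁, …, γ_s} acts transitively and primitively on Fin d. -/

import Mathlib

open Equiv MulAction

namespace ATD

variable {d : ℕ}

/-! ### basic cast toolbox -/

lemma cinj [NeZero d] {p q : ℕ} (hp : p < d) (hq : q < d) (h : (p : ZMod d) = q) : p = q := by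
  have := congrArg ZMod.val h
  rwa [ZMod.val_cast_of_lt hp, ZMod.val_cast_of_lt hq] at this

lemma cne [NeZero d] {p q : ℕ} (hp : p < d) (hq : q < d) (hpq : p ≠ q) :
    (p : ZMod d) ≠ (q : ZMod d) := fun hc => hpq (cinj hp hq hc)

lemma csub {q : ℕ} (hq : q ≤ d) : ((d - q : ℕ) : ZMod d) = -(q : ZMod d) := by
  rw [Nat.cast_sub hq, ZMod.natCast_self, zero_sub]

lemma c0 : ((0 : ℕ) : ZMod d) = 0 := Nat.cast_zero
lemma c1 : ((1 : ℕ) : ZMod d) = 1 := Nat.cast_one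
lemma c2 : ((2 : ℕ) : ZMod d) = 2 := by push_cast; ring
lemma c9 : ((9 : ℕ) : ZMod d) = 9 := by push_cast; ring

lemma no_half (hd2 : 2 ∣ d) {u : ℕ} (hu : u % 2 = 1) (x : ZMod d) :
    x + x ≠ (u : ZMod d) := by
  intro h
  have h2 := congrArg (ZMod.castHom hd2 (ZMod 2)) h
  rw [map_add, map_natCast] at h2
  have hu1 : (u : ZMod 2) = 1 := by
    obtain ⟨k, hk⟩ : ∃ k, u = 2 * k + 1 := ⟨u / 2, by omega⟩
    subst hk; push_cast
    rw [show ((2 : ZMod 2)) = 0 by decide]; ring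
  have hyy : ∀ y : ZMod 2, y + y = 0 := by decide
  rw [hyy, hu1] at h2
  exact absurd h2 (by decide)

lemma dvd_val_iff [NeZero d] {e : ℕ} [NeZero e] (hed : e ∣ d) (x : ZMod d) :
    e ∣ x.val ↔ (ZMod.castHom hed (ZMod e)) x = 0 := by
  rw [ZMod.castHom_apply, ← ZMod.natCast_val, ZMod.natCast_eq_zero_iff]

/-! ### the permutations -/

def cc (d : ℕ) : Perm (ZMod d) := Equiv.addLeft 1
def pa (d : ℕ) : Perm (ZMod d) := Equiv.subLeft (-1)
def pb (d : ℕ) : Perm (ZMod d) := Equiv.subLeft 1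

lemma cc_apply (x : ZMod d) : cc d x = 1 + x := rfl
lemma pa_apply (x : ZMod d) : pa d x = -1 - x := rfl
lemma pb_apply (x : ZMod d) : pb d x = 1 - x := rfl

lemma pa_invol : pa d * pa d = 1 := by
  ext x; simp only [pa, Perm.mul_apply, Equiv.subLeft_apply, Perm.one_apply]; ring

lemma pb_invol : pb d * pb d = 1 := by
  ext x; simp only [pb, Perm.mul_apply, Equiv.subLeft_apply, Perm.one_apply]; ring

lemma pa_fpf [NeZero d] (hd6 : 6 ≤ d) (hd2 : 2 ∣ d) (x : ZMod d) : pa d x ≠ x := by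
  intro h
  rw [pa_apply] at h
  apply no_half hd2 (u := d - 1) (by omega) x
  rw [csub (by omega)]
  linear_combination -h

lemma pb_fpf [NeZero d] (hd6 : 6 ≤ d) (hd2 : 2 ∣ d) (x : ZMod d) : pb d x ≠ x := by
  intro h
  rw [pb_apply] at h
  apply no_half hd2 (u := 1) (by omega) x
  rw [c1]
  linear_combination -h

lemma key_prod [NeZero d] : cc d ^ 2 * (pa d * pb d) = 1 := by
  ext x
  simp only [sq, Perm.mul_apply, cc, pa, pb, Equiv.coe_addLeft, Equiv.subLeft_apply,
    Perm.one_apply]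
  ring

/-! ### powers of the rotation -/

lemma cc_pow (m : ℕ) : (cc d) ^ m = Equiv.addLeft (m : ZMod d) := by
  induction m with
  | zero => ext x; simp [cc]
  | succ k ih =>
      rw [pow_succ, ih]
      ext x
      simp only [Perm.mul_apply, cc, Equiv.coe_addLeft]
      push_cast
      ring

lemma cc_pow_apply (m : ℕ) (x : ZMod d) : ((cc d) ^ m) x = (m : ZMod d) + x := by
  rw [cc_pow]; rfl


/-! ### transitivity and blocks -/

open Pointwise

def Breaks (d : ℕ) (g : Perm (ZMod d)) : Prop :=
  ∀ e : ℕ, e ∣ d → 1 < e → e < d →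
    ∃ z : ZMod d, e ∣ z.val ∧ ¬ e ∣ ((g z) - (g 0)).val

lemma transitive' [NeZero d] (G : Subgroup (Perm (ZMod d))) (hc : cc d ∈ G) :
    IsPretransitive G (ZMod d) := by
  constructor
  intro x y
  refine ⟨⟨cc d ^ (y - x).val, pow_mem hc _⟩, ?_⟩
  show (cc d ^ (y - x).val) • x = y
  rw [Equiv.Perm.smul_def, cc_pow_apply, ZMod.natCast_zmod_val]
  ring

lemma blocks_trivial [NeZero d] (G : Subgroup (Perm (ZMod d))) (hc : cc d ∈ G)
    (g : Perm (ZMod d)) (hg : g ∈ G) (hbrk : Breaks d g)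
    {Λ : Set (ZMod d)} (hΛ : IsBlock G Λ) : IsTrivialBlock Λ := by
  classical
  by_cases hsub : Λ.Subsingleton
  · exact Or.inl hsub
  right
  rw [Set.not_subsingleton_iff] at hsub
  obtain ⟨x₀, hx₀, y₀, hy₀, hxy⟩ := hsub
  set T : ZMod d → G := fun t => ⟨cc d ^ t.val, pow_mem hc _⟩ with hT
  have hTapp : ∀ (t x : ZMod d), (T t) • x = t + x := by
    intro t x
    show (cc d ^ t.val) • x = t + x
    rw [Equiv.Perm.smul_def, cc_pow_apply, ZMod.natCast_zmod_val]
  set Λ₀ : Set (ZMod d) := (T (-x₀)) • Λ with hΛ₀def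
  have hΛ₀ : IsBlock G Λ₀ := hΛ.translate (T (-x₀))
  have h0 : (0 : ZMod d) ∈ Λ₀ := by
    have := Set.smul_mem_smul_set (a := T (-x₀)) hx₀
    rwa [hTapp, neg_add_cancel] at this
  have hstab : ∀ k : ZMod d, k ∈ Λ₀ → (T k) • Λ₀ = Λ₀ := by
    intro k hk
    apply hΛ₀.smul_eq_of_mem (a := 0) h0
    rw [hTapp]; simpa using hk
  have hadd : ∀ k j : ZMod d, k ∈ Λ₀ → j ∈ Λ₀ → k + j ∈ Λ₀ := by
    intro k j hk hj
    rw [← hstab k hk]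
    have := Set.smul_mem_smul_set (a := T k) hj
    rwa [hTapp] at this
  have hneg : ∀ k : ZMod d, k ∈ Λ₀ → -k ∈ Λ₀ := by
    intro k hk
    have h1 : (T (-k)) • Λ₀ = Λ₀ := by
      apply hΛ₀.smul_eq_of_mem (a := k) hk
      rw [hTapp]; simpa using h0
    rw [← h1]
    have := Set.smul_mem_smul_set (a := T (-k)) h0
    rwa [hTapp, add_zero] at this
  obtain ⟨y₁, hy₁, hy₁0⟩ : ∃ y ∈ Λ₀, y ≠ 0 := by
    have hy' : -x₀ + y₀ ∈ Λ₀ := by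
      have := Set.smul_mem_smul_set (a := T (-x₀)) hy₀
      rwa [hTapp] at this
    exact ⟨-x₀ + y₀, hy', fun h => hxy (by linear_combination -h)⟩
  have hex : ∃ m : ℕ, 0 < m ∧ m < d ∧ ((m : ℕ) : ZMod d) ∈ Λ₀ := by
    refine ⟨y₁.val, ?_, ZMod.val_lt y₁, by rwa [ZMod.natCast_zmod_val]⟩
    exact Nat.pos_of_ne_zero (fun h => hy₁0 ((ZMod.val_eq_zero y₁).mp h))
  set e := Nat.find hex with he_def
  obtain ⟨he_pos, he_lt, he_mem⟩ := Nat.find_spec hex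
  have hmul : ∀ j : ℕ, ((j * e : ℕ) : ZMod d) ∈ Λ₀ := by
    intro j
    induction j with
    | zero => simpa using h0
    | succ k ih =>
        have h2 : (((k + 1) * e : ℕ) : ZMod d) = ((k * e : ℕ) : ZMod d) + ((e : ℕ) : ZMod d) := by
          push_cast; ring
        rw [h2]
        exact hadd _ _ ih he_mem
  have hdvd : ∀ z : ZMod d, z ∈ Λ₀ → e ∣ z.val := by
    intro z hz
    by_contra hnd
    have hr : 0 < z.val % e := Nat.pos_of_ne_zero (fun h => hnd (Nat.dvd_of_mod_eq_zero h))
    have hre : z.val % e < e := Nat.mod_lt _ he_pos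
    apply Nat.find_min hex hre
    refine ⟨hr, lt_trans hre he_lt, ?_⟩
    have h2 : ((z.val % e : ℕ) : ZMod d) = z + -(((z.val / e * e : ℕ) : ZMod d)) := by
      have h3 : z.val % e + z.val / e * e = z.val := Nat.mod_add_div' z.val e
      have h4 := congrArg (fun m : ℕ => ((m : ℕ) : ZMod d)) h3
      simp only [Nat.cast_add] at h4
      rw [ZMod.natCast_zmod_val] at h4
      linear_combination h4
    rw [h2]
    exact hadd _ _ hz (hneg _ (hmul (z.val / e)))
  have hed : e ∣ d := by
    have h1 := hdvd _ (hneg _ he_mem)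
    have hv : (-((e : ℕ) : ZMod d)).val = d - e := by
      rw [ZMod.neg_val, if_neg, ZMod.val_cast_of_lt he_lt]
      intro h
      have := congrArg ZMod.val h
      rw [ZMod.val_cast_of_lt he_lt, ZMod.val_zero] at this
      omega
    rw [hv] at h1
    have h2 : d - e + e = d := by omega
    calc e ∣ (d - e) + e := Nat.dvd_add h1 dvd_rfl
    _ = d := h2
  have hmem_iff : ∀ z : ZMod d, z ∈ Λ₀ ↔ e ∣ z.val := by
    intro z
    refine ⟨hdvd z, ?_⟩
    rintro ⟨k, hk⟩
    have h1 := hmul k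
    rw [show k * e = e * k by ring, ← hk, ZMod.natCast_zmod_val] at h1
    exact h1
  rcases eq_or_lt_of_le (Nat.succ_le_of_lt he_pos : 1 ≤ Nat.find hex) with he1 | he2
  · -- e = 1 : everything is in Λ₀
    have huniv : Λ₀ = Set.univ :=
      Set.eq_univ_of_forall (fun z => (hmem_iff z).mpr (by show Nat.find hex ∣ z.val; rw [← he1]; exact one_dvd _))
    have hrec : Λ = (T (-x₀))⁻¹ • Λ₀ := by rw [hΛ₀def, inv_smul_smul]
    rw [hrec, huniv, Set.smul_set_univ]
  · exfalso
    obtain ⟨z, hz1, hz2⟩ := hbrk e hed he2 he_lt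
    set g' : G := (T (-(g 0))) * ⟨g, hg⟩ with hg'def
    have hg'app : ∀ x : ZMod d, g' • x = g x - g 0 := by
      intro x
      show (cc d ^ (-(g 0)).val * g) • x = g x - g 0
      rw [Equiv.Perm.smul_def, Perm.mul_apply, cc_pow_apply, ZMod.natCast_zmod_val]
      ring
    have hfix : g' • Λ₀ = Λ₀ := by
      apply hΛ₀.smul_eq_of_mem (a := 0) h0
      rw [hg'app]
      simpa using h0
    have hzin : g z - g 0 ∈ Λ₀ := by
      rw [← hfix]
      have := Set.smul_mem_smul_set (a := g') ((hmem_iff z).mpr hz1)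
      rwa [hg'app] at this
    exact hz2 ((hmem_iff _).mp hzin)


/-! ### the involution B -/

def fB (d : ℕ) : ZMod d → ZMod d := fun x =>
  if x = 0 then ((d - 2 : ℕ) : ZMod d)
  else if x = ((d - 2 : ℕ) : ZMod d) then 0
  else if x = 1 then ((d - 1 : ℕ) : ZMod d)
  else if x = ((d - 1 : ℕ) : ZMod d) then 1
  else ((d - 1 : ℕ) : ZMod d) - x

section Bsec
variable [NeZero d] (hd6 : 6 ≤ d)
include hd6

lemma cm1 : ((d - 1 : ℕ) : ZMod d) = -1 := by rw [csub (by omega), c1]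

lemma cm2 : ((d - 2 : ℕ) : ZMod d) = -2 := by rw [csub (by omega), c2]

lemma fB_at_0 : fB d 0 = ((d - 2 : ℕ) : ZMod d) := by
  unfold fB; rw [if_pos rfl]

lemma fB_at_m2 : fB d ((d - 2 : ℕ) : ZMod d) = 0 := by
  unfold fB
  rw [if_neg (by rw [← c0]; exact cne (by omega) (by omega) (by omega)), if_pos rfl]

lemma fB_at_1 : fB d 1 = ((d - 1 : ℕ) : ZMod d) := by
  unfold fB
  rw [if_neg (by rw [← c0, ← c1]; exact cne (by omega) (by omega) (by omega)),
      if_neg (by rw [← c1]; exact cne (by omega) (by omega) (by omega)), if_pos rfl]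

lemma fB_at_m1 : fB d ((d - 1 : ℕ) : ZMod d) = 1 := by
  unfold fB
  rw [if_neg (by rw [← c0]; exact cne (by omega) (by omega) (by omega)),
      if_neg (cne (by omega) (by omega) (by omega)),
      if_neg (by rw [← c1]; exact cne (by omega) (by omega) (by omega)), if_pos rfl]

lemma fB_generic (x : ZMod d) (h0 : x ≠ 0) (hm2 : x ≠ ((d - 2 : ℕ) : ZMod d))
    (h1 : x ≠ 1) (hm1 : x ≠ ((d - 1 : ℕ) : ZMod d)) :
    fB d x = ((d - 1 : ℕ) : ZMod d) - x := by
  unfold fB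
  rw [if_neg h0, if_neg hm2, if_neg h1, if_neg hm1]

lemma fB_invol : Function.Involutive (fB d) := by
  intro x
  have e1 : ((d - 1 : ℕ) : ZMod d) = -1 := cm1 hd6
  have e2 : ((d - 2 : ℕ) : ZMod d) = -2 := cm2 hd6
  by_cases h0 : x = 0
  · rw [h0, fB_at_0 hd6, fB_at_m2 hd6]
  by_cases hm2 : x = ((d - 2 : ℕ) : ZMod d)
  · rw [hm2, fB_at_m2 hd6, fB_at_0 hd6]
  by_cases h1 : x = 1
  · rw [h1, fB_at_1 hd6, fB_at_m1 hd6]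
  by_cases hm1 : x = ((d - 1 : ℕ) : ZMod d)
  · rw [hm1, fB_at_m1 hd6, fB_at_1 hd6]
  · rw [fB_generic hd6 x h0 hm2 h1 hm1]
    have hg0 : ((d - 1 : ℕ) : ZMod d) - x ≠ 0 := fun h => hm1 (by linear_combination -h)
    have hgm2 : ((d - 1 : ℕ) : ZMod d) - x ≠ ((d - 2 : ℕ) : ZMod d) := fun h =>
      h1 (by rw [e1, e2] at h; linear_combination -h)
    have hg1 : ((d - 1 : ℕ) : ZMod d) - x ≠ 1 := fun h =>
      hm2 (by rw [e1] at h; rw [e2]; linear_combination -h)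
    have hgm1 : ((d - 1 : ℕ) : ZMod d) - x ≠ ((d - 1 : ℕ) : ZMod d) := fun h =>
      h0 (by linear_combination -h)
    rw [fB_generic hd6 _ hg0 hgm2 hg1 hgm1]
    ring

lemma fB_fpf (hd2 : 2 ∣ d) (x : ZMod d) : fB d x ≠ x := by
  by_cases h0 : x = 0
  · rw [h0, fB_at_0 hd6, ← c0]; exact cne (by omega) (by omega) (by omega)
  by_cases hm2 : x = ((d - 2 : ℕ) : ZMod d)
  · rw [hm2, fB_at_m2 hd6, ← c0]
    exact cne (by omega) (by omega) (by omega)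
  by_cases h1 : x = 1
  · rw [h1, fB_at_1 hd6, ← c1]; exact cne (by omega) (by omega) (by omega)
  by_cases hm1 : x = ((d - 1 : ℕ) : ZMod d)
  · rw [hm1, fB_at_m1 hd6, ← c1]
    exact cne (by omega) (by omega) (by omega)
  · rw [fB_generic hd6 x h0 hm2 h1 hm1]
    intro h
    apply no_half hd2 (u := d - 1) (by omega) x
    linear_combination -h

lemma breaks_fB (B : Perm (ZMod d)) (hB : ∀ x, B x = fB d x) : Breaks d B := by
  intro e hed he2 helt
  haveI : NeZero e := ⟨by omega⟩
  have h2e : 2 * e ≤ d := by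
    obtain ⟨k, hk⟩ := hed
    rcases Nat.lt_or_ge k 2 with h | h
    · interval_cases k <;> omega
    · calc 2 * e = e * 2 := by ring
        _ ≤ e * k := Nat.mul_le_mul_left e h
        _ = d := hk.symm
  refine ⟨((e : ℕ) : ZMod d), by rw [ZMod.val_cast_of_lt helt], ?_⟩
  have hz0 : ((e : ℕ) : ZMod d) ≠ 0 := by rw [← c0]; exact cne helt (by omega) (by omega)
  have hzm2 : ((e : ℕ) : ZMod d) ≠ ((d - 2 : ℕ) : ZMod d) := cne helt (by omega) (by omega)
  have hz1 : ((e : ℕ) : ZMod d) ≠ 1 := by rw [← c1]; exact cne helt (by omega) (by omega)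
  have hzm1 : ((e : ℕ) : ZMod d) ≠ ((d - 1 : ℕ) : ZMod d) := cne helt (by omega) (by omega)
  rw [hB, hB, fB_generic hd6 _ hz0 hzm2 hz1 hzm1, fB_at_0 hd6]
  have hsimp : ((d - 1 : ℕ) : ZMod d) - ((e : ℕ) : ZMod d) - ((d - 2 : ℕ) : ZMod d) =
      1 - ((e : ℕ) : ZMod d) := by
    rw [cm1 hd6, cm2 hd6]; ring
  rw [hsimp, dvd_val_iff hed, map_sub, map_one, map_natCast, ZMod.natCast_self]
  haveI : Fact (1 < e) := ⟨he2⟩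
  simp

end Bsec


/-! ### helper: divisor bound -/

lemma two_mul_le {e : ℕ} (hed : e ∣ d) (helt : e < d) : 2 * e ≤ d := by
  obtain ⟨k, hk⟩ := hed
  rcases Nat.lt_or_ge k 2 with h | h
  · interval_cases k <;> omega
  · calc 2 * e = e * 2 := by ring
      _ ≤ e * k := Nat.mul_le_mul_left e h
      _ = d := hk.symm

/-! ### the involution v (for odd s, d divisible by 4) -/

def fv (d : ℕ) : ZMod d → ZMod d := fun x =>
  if x = 0 then 2
  else if x = 2 then 0
  else if x = 1 then ((d - 1 : ℕ) : ZMod d)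
  else if x = ((d - 1 : ℕ) : ZMod d) then 1
  else if x = ((d / 2 : ℕ) : ZMod d) then ((d / 2 - 1 : ℕ) : ZMod d)
  else if x = ((d / 2 - 1 : ℕ) : ZMod d) then ((d / 2 : ℕ) : ZMod d)
  else if x = ((d / 2 + 1 : ℕ) : ZMod d) then ((d / 2 + 2 : ℕ) : ZMod d)
  else if x = ((d / 2 + 2 : ℕ) : ZMod d) then ((d / 2 + 1 : ℕ) : ZMod d)
  else ((d / 2 + 1 : ℕ) : ZMod d) - x

section Vsec
variable [NeZero d] (hd8 : 8 ≤ d) (h4 : d % 4 = 0)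
include hd8 h4

lemma eM1 : ((d / 2 - 1 : ℕ) : ZMod d) = ((d / 2 : ℕ) : ZMod d) - 1 := by
  rw [Nat.cast_sub (by omega), c1]

lemma eP1 : ((d / 2 + 1 : ℕ) : ZMod d) = ((d / 2 : ℕ) : ZMod d) + 1 := by push_cast; ring

lemma eP2 : ((d / 2 + 2 : ℕ) : ZMod d) = ((d / 2 : ℕ) : ZMod d) + 2 := by push_cast; ring

lemma eMM : ((d / 2 : ℕ) : ZMod d) + ((d / 2 : ℕ) : ZMod d) = 0 := by
  rw [← Nat.cast_add, show d / 2 + d / 2 = d by omega, ZMod.natCast_self]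

lemma fv_at_0 : fv d 0 = 2 := by unfold fv; rw [if_pos rfl]

lemma fv_at_2 : fv d 2 = 0 := by
  unfold fv
  rw [if_neg (by rw [← c0, ← c2]; exact cne (by omega) (by omega) (by omega)), if_pos rfl]

lemma fv_at_1 : fv d 1 = ((d - 1 : ℕ) : ZMod d) := by
  unfold fv
  rw [if_neg (by rw [← c0, ← c1]; exact cne (by omega) (by omega) (by omega)),
      if_neg (by rw [← c1, ← c2]; exact cne (by omega) (by omega) (by omega)), if_pos rfl]

lemma fv_at_m1 : fv d ((d - 1 : ℕ) : ZMod d) = 1 := by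
  unfold fv
  rw [if_neg (by rw [← c0]; exact cne (by omega) (by omega) (by omega)),
      if_neg (by rw [← c2]; exact cne (by omega) (by omega) (by omega)),
      if_neg (by rw [← c1]; exact cne (by omega) (by omega) (by omega)), if_pos rfl]

lemma fv_at_h : fv d ((d / 2 : ℕ) : ZMod d) = ((d / 2 - 1 : ℕ) : ZMod d) := by
  unfold fv
  rw [if_neg (by rw [← c0]; exact cne (by omega) (by omega) (by omega)),
      if_neg (by rw [← c2]; exact cne (by omega) (by omega) (by omega)),
      if_neg (by rw [← c1]; exact cne (by omega) (by omega) (by omega)),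
      if_neg (cne (by omega) (by omega) (by omega)), if_pos rfl]

lemma fv_at_hm : fv d ((d / 2 - 1 : ℕ) : ZMod d) = ((d / 2 : ℕ) : ZMod d) := by
  unfold fv
  rw [if_neg (by rw [← c0]; exact cne (by omega) (by omega) (by omega)),
      if_neg (by rw [← c2]; exact cne (by omega) (by omega) (by omega)),
      if_neg (by rw [← c1]; exact cne (by omega) (by omega) (by omega)),
      if_neg (cne (by omega) (by omega) (by omega)),
      if_neg (cne (by omega) (by omega) (by omega)), if_pos rfl]

lemma fv_at_hp : fv d ((d / 2 + 1 : ℕ) : ZMod d) = ((d / 2 + 2 : ℕ) : ZMod d) := by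
  unfold fv
  rw [if_neg (by rw [← c0]; exact cne (by omega) (by omega) (by omega)),
      if_neg (by rw [← c2]; exact cne (by omega) (by omega) (by omega)),
      if_neg (by rw [← c1]; exact cne (by omega) (by omega) (by omega)),
      if_neg (cne (by omega) (by omega) (by omega)),
      if_neg (cne (by omega) (by omega) (by omega)),
      if_neg (cne (by omega) (by omega) (by omega)), if_pos rfl]

lemma fv_at_hpp : fv d ((d / 2 + 2 : ℕ) : ZMod d) = ((d / 2 + 1 : ℕ) : ZMod d) := by
  unfold fv
  rw [if_neg (by rw [← c0]; exact cne (by omega) (by omega) (by omega)),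
      if_neg (by rw [← c2]; exact cne (by omega) (by omega) (by omega)),
      if_neg (by rw [← c1]; exact cne (by omega) (by omega) (by omega)),
      if_neg (cne (by omega) (by omega) (by omega)),
      if_neg (cne (by omega) (by omega) (by omega)),
      if_neg (cne (by omega) (by omega) (by omega)),
      if_neg (cne (by omega) (by omega) (by omega)), if_pos rfl]

omit hd8 h4 in
lemma fv_generic (x : ZMod d) (h0 : x ≠ 0) (h2 : x ≠ 2) (h1 : x ≠ 1)
    (hm1 : x ≠ ((d - 1 : ℕ) : ZMod d)) (hh : x ≠ ((d / 2 : ℕ) : ZMod d))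
    (hhm : x ≠ ((d / 2 - 1 : ℕ) : ZMod d)) (hhp : x ≠ ((d / 2 + 1 : ℕ) : ZMod d))
    (hhpp : x ≠ ((d / 2 + 2 : ℕ) : ZMod d)) :
    fv d x = ((d / 2 + 1 : ℕ) : ZMod d) - x := by
  unfold fv
  rw [if_neg h0, if_neg h2, if_neg h1, if_neg hm1, if_neg hh, if_neg hhm, if_neg hhp,
    if_neg hhpp]

lemma fv_invol : Function.Involutive (fv d) := by
  intro x
  have em1 : ((d - 1 : ℕ) : ZMod d) = -1 := cm1 (by omega)
  by_cases h0 : x = 0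
  · rw [h0, fv_at_0 hd8 h4, fv_at_2 hd8 h4]
  by_cases h2 : x = 2
  · rw [h2, fv_at_2 hd8 h4, fv_at_0 hd8 h4]
  by_cases h1 : x = 1
  · rw [h1, fv_at_1 hd8 h4, fv_at_m1 hd8 h4]
  by_cases hm1 : x = ((d - 1 : ℕ) : ZMod d)
  · rw [hm1, fv_at_m1 hd8 h4, fv_at_1 hd8 h4]
  by_cases hh : x = ((d / 2 : ℕ) : ZMod d)
  · rw [hh, fv_at_h hd8 h4, fv_at_hm hd8 h4]
  by_cases hhm : x = ((d / 2 - 1 : ℕ) : ZMod d)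
  · rw [hhm, fv_at_hm hd8 h4, fv_at_h hd8 h4]
  by_cases hhp : x = ((d / 2 + 1 : ℕ) : ZMod d)
  · rw [hhp, fv_at_hp hd8 h4, fv_at_hpp hd8 h4]
  by_cases hhpp : x = ((d / 2 + 2 : ℕ) : ZMod d)
  · rw [hhpp, fv_at_hpp hd8 h4, fv_at_hp hd8 h4]
  · rw [fv_generic x h0 h2 h1 hm1 hh hhm hhp hhpp]
    have g0 : ((d / 2 + 1 : ℕ) : ZMod d) - x ≠ 0 := fun h => hhp (by linear_combination -h)
    have g2 : ((d / 2 + 1 : ℕ) : ZMod d) - x ≠ 2 := fun h =>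
      hhm (by rw [eM1 hd8 h4]; rw [eP1 hd8 h4] at h; linear_combination -h)
    have g1 : ((d / 2 + 1 : ℕ) : ZMod d) - x ≠ 1 := fun h =>
      hh (by rw [eP1 hd8 h4] at h; linear_combination -h)
    have gm1 : ((d / 2 + 1 : ℕ) : ZMod d) - x ≠ ((d - 1 : ℕ) : ZMod d) := fun h =>
      hhpp (by rw [eP2 hd8 h4]; rw [eP1 hd8 h4, em1] at h; linear_combination -h)
    have gh : ((d / 2 + 1 : ℕ) : ZMod d) - x ≠ ((d / 2 : ℕ) : ZMod d) := fun h =>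
      h1 (by rw [eP1 hd8 h4] at h; linear_combination -h)
    have ghm : ((d / 2 + 1 : ℕ) : ZMod d) - x ≠ ((d / 2 - 1 : ℕ) : ZMod d) := fun h =>
      h2 (by rw [eP1 hd8 h4, eM1 hd8 h4] at h; linear_combination -h)
    have ghp : ((d / 2 + 1 : ℕ) : ZMod d) - x ≠ ((d / 2 + 1 : ℕ) : ZMod d) := fun h =>
      h0 (by linear_combination -h)
    have ghpp : ((d / 2 + 1 : ℕ) : ZMod d) - x ≠ ((d / 2 + 2 : ℕ) : ZMod d) := fun h =>
      hm1 (by rw [em1]; rw [eP1 hd8 h4, eP2 hd8 h4] at h; linear_combination -h)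
    rw [fv_generic _ g0 g2 g1 gm1 gh ghm ghp ghpp]
    ring

lemma fv_fpf (x : ZMod d) : fv d x ≠ x := by
  by_cases h0 : x = 0
  · rw [h0, fv_at_0 hd8 h4, ← c0, ← c2]; exact cne (by omega) (by omega) (by omega)
  by_cases h2 : x = 2
  · rw [h2, fv_at_2 hd8 h4, ← c0, ← c2]; exact cne (by omega) (by omega) (by omega)
  by_cases h1 : x = 1
  · rw [h1, fv_at_1 hd8 h4, ← c1]; exact cne (by omega) (by omega) (by omega)
  by_cases hm1 : x = ((d - 1 : ℕ) : ZMod d)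
  · rw [hm1, fv_at_m1 hd8 h4, ← c1]; exact cne (by omega) (by omega) (by omega)
  by_cases hh : x = ((d / 2 : ℕ) : ZMod d)
  · rw [hh, fv_at_h hd8 h4]; exact cne (by omega) (by omega) (by omega)
  by_cases hhm : x = ((d / 2 - 1 : ℕ) : ZMod d)
  · rw [hhm, fv_at_hm hd8 h4]; exact cne (by omega) (by omega) (by omega)
  by_cases hhp : x = ((d / 2 + 1 : ℕ) : ZMod d)
  · rw [hhp, fv_at_hp hd8 h4]; exact cne (by omega) (by omega) (by omega)
  by_cases hhpp : x = ((d / 2 + 2 : ℕ) : ZMod d)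
  · rw [hhpp, fv_at_hpp hd8 h4]; exact cne (by omega) (by omega) (by omega)
  · rw [fv_generic x h0 h2 h1 hm1 hh hhm hhp hhpp]
    intro h
    apply no_half (by omega : 2 ∣ d) (u := d / 2 + 1) (by omega) x
    linear_combination -h

lemma fv_comm (x : ZMod d) : fv d (1 - x) = 1 - fv d x := by
  have em1 : ((d - 1 : ℕ) : ZMod d) = -1 := cm1 (by omega)
  have hMM := eMM hd8 h4
  by_cases h0 : x = 0
  · rw [h0, sub_zero, fv_at_1 hd8 h4, fv_at_0 hd8 h4, em1]; ring
  by_cases h2 : x = 2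
  · rw [h2, show (1 : ZMod d) - 2 = ((d - 1 : ℕ) : ZMod d) by rw [em1]; ring,
      fv_at_m1 hd8 h4, fv_at_2 hd8 h4]; ring
  by_cases h1 : x = 1
  · rw [h1, sub_self, fv_at_0 hd8 h4, fv_at_1 hd8 h4, em1]; ring
  by_cases hm1 : x = ((d - 1 : ℕ) : ZMod d)
  · rw [hm1, show (1 : ZMod d) - ((d - 1 : ℕ) : ZMod d) = 2 by rw [em1]; ring,
      fv_at_2 hd8 h4, fv_at_m1 hd8 h4]; ring
  by_cases hh : x = ((d / 2 : ℕ) : ZMod d)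
  · rw [hh, show (1 : ZMod d) - ((d / 2 : ℕ) : ZMod d) = ((d / 2 + 1 : ℕ) : ZMod d) by
      rw [eP1 hd8 h4]; linear_combination -hMM,
      fv_at_hp hd8 h4, fv_at_h hd8 h4, eP2 hd8 h4, eM1 hd8 h4]
    linear_combination hMM
  by_cases hhm : x = ((d / 2 - 1 : ℕ) : ZMod d)
  · rw [hhm, show (1 : ZMod d) - ((d / 2 - 1 : ℕ) : ZMod d) = ((d / 2 + 2 : ℕ) : ZMod d) by
      rw [eP2 hd8 h4, eM1 hd8 h4]; linear_combination -hMM,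
      fv_at_hpp hd8 h4, fv_at_hm hd8 h4, eP1 hd8 h4]
    linear_combination hMM
  by_cases hhp : x = ((d / 2 + 1 : ℕ) : ZMod d)
  · rw [hhp, show (1 : ZMod d) - ((d / 2 + 1 : ℕ) : ZMod d) = ((d / 2 : ℕ) : ZMod d) by
      rw [eP1 hd8 h4]; linear_combination -hMM,
      fv_at_h hd8 h4, fv_at_hp hd8 h4, eM1 hd8 h4, eP2 hd8 h4]
    linear_combination hMM
  by_cases hhpp : x = ((d / 2 + 2 : ℕ) : ZMod d)
  · rw [hhpp, show (1 : ZMod d) - ((d / 2 + 2 : ℕ) : ZMod d) = ((d / 2 - 1 : ℕ) : ZMod d) by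
      rw [eP2 hd8 h4, eM1 hd8 h4]; linear_combination -hMM,
      fv_at_hm hd8 h4, fv_at_hpp hd8 h4, eP1 hd8 h4]
    linear_combination hMM
  · have g0 : 1 - x ≠ 0 := fun h => h1 (by linear_combination -h)
    have g2 : 1 - x ≠ 2 := fun h => hm1 (by rw [em1]; linear_combination -h)
    have g1 : 1 - x ≠ 1 := fun h => h0 (by linear_combination -h)
    have gm1 : 1 - x ≠ ((d - 1 : ℕ) : ZMod d) := fun h => h2 (by rw [em1] at h; linear_combination -h)
    have gh : 1 - x ≠ ((d / 2 : ℕ) : ZMod d) := fun h =>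
      hhp (by rw [eP1 hd8 h4]; linear_combination -h - hMM)
    have ghm : 1 - x ≠ ((d / 2 - 1 : ℕ) : ZMod d) := fun h =>
      hhpp (by rw [eP2 hd8 h4]; rw [eM1 hd8 h4] at h; linear_combination -h - hMM)
    have ghp : 1 - x ≠ ((d / 2 + 1 : ℕ) : ZMod d) := fun h =>
      hh (by rw [eP1 hd8 h4] at h; linear_combination -h - hMM)
    have ghpp : 1 - x ≠ ((d / 2 + 2 : ℕ) : ZMod d) := fun h =>
      hhm (by rw [eM1 hd8 h4]; rw [eP2 hd8 h4] at h; linear_combination -h - hMM)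
    rw [fv_generic _ g0 g2 g1 gm1 gh ghm ghp ghpp,
      fv_generic x h0 h2 h1 hm1 hh hhm hhp hhpp, eP1 hd8 h4]
    linear_combination hMM

lemma fv_ne_pb (x : ZMod d) : fv d x ≠ 1 - x := by
  have em1 : ((d - 1 : ℕ) : ZMod d) = -1 := cm1 (by omega)
  have hMM := eMM hd8 h4
  have h20 : (2 : ZMod d) ≠ 0 := by rw [← c0, ← c2]; exact cne (by omega) (by omega) (by omega)
  have h10 : (1 : ZMod d) ≠ 0 := by rw [← c0, ← c1]; exact cne (by omega) (by omega) (by omega)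
  by_cases h0 : x = 0
  · rw [h0, fv_at_0 hd8 h4, sub_zero, ← c1, ← c2]; exact cne (by omega) (by omega) (by omega)
  by_cases h2 : x = 2
  · rw [h2, fv_at_2 hd8 h4]
    intro h; exact h10 (by linear_combination h)
  by_cases h1 : x = 1
  · rw [h1, fv_at_1 hd8 h4, sub_self, em1]
    intro h; exact h10 (by linear_combination -h)
  by_cases hm1 : x = ((d - 1 : ℕ) : ZMod d)
  · rw [hm1, fv_at_m1 hd8 h4, em1]
    intro h; exact h10 (by linear_combination -h)
  by_cases hh : x = ((d / 2 : ℕ) : ZMod d)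
  · rw [hh, fv_at_h hd8 h4, eM1 hd8 h4]
    intro h; exact h20 (by linear_combination hMM - h)
  by_cases hhm : x = ((d / 2 - 1 : ℕ) : ZMod d)
  · rw [hhm, fv_at_hm hd8 h4, eM1 hd8 h4]
    intro h; exact h20 (by linear_combination hMM - h)
  by_cases hhp : x = ((d / 2 + 1 : ℕ) : ZMod d)
  · rw [hhp, fv_at_hp hd8 h4, eP1 hd8 h4, eP2 hd8 h4]
    intro h; exact h20 (by linear_combination h - hMM)
  by_cases hhpp : x = ((d / 2 + 2 : ℕ) : ZMod d)
  · rw [hhpp, fv_at_hpp hd8 h4, eP1 hd8 h4, eP2 hd8 h4]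
    intro h; exact h20 (by linear_combination h - hMM)
  · rw [fv_generic x h0 h2 h1 hm1 hh hhm hhp hhpp, eP1 hd8 h4]
    intro h
    have hM0 : ((d / 2 : ℕ) : ZMod d) = ((0 : ℕ) : ZMod d) := by
      rw [c0]; linear_combination h
    exact (by omega : ¬ d / 2 = 0) (cinj (by omega) (by omega) hM0)


lemma breaks_fv (V : Perm (ZMod d)) (hV : ∀ x, V x = fv d x) : Breaks d V := by
  intro e hed he2 helt
  haveI : NeZero e := ⟨by omega⟩
  have h2e : 2 * e ≤ d := two_mul_le hed helt
  have hVh0 : V 0 = 2 := by rw [hV, fv_at_0 hd8 h4]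
  by_cases heh : e ∣ d / 2
  · by_cases he3 : e = 3
    · -- e = 3, use z = 9
      subst he3
      have hd12 : 12 ≤ d := by omega
      refine ⟨((9 : ℕ) : ZMod d), by rw [ZMod.val_cast_of_lt (by omega)]; omega, ?_⟩
      have hz0 : ((9 : ℕ) : ZMod d) ≠ 0 := by rw [← c0]; exact cne (by omega) (by omega) (by omega)
      have hz2 : ((9 : ℕ) : ZMod d) ≠ 2 := by rw [← c2]; exact cne (by omega) (by omega) (by omega)
      have hz1 : ((9 : ℕ) : ZMod d) ≠ 1 := by rw [← c1]; exact cne (by omega) (by omega) (by omega)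
      have hzm1 : ((9 : ℕ) : ZMod d) ≠ ((d - 1 : ℕ) : ZMod d) :=
        cne (by omega) (by omega) (by omega)
      have hzh : ((9 : ℕ) : ZMod d) ≠ ((d / 2 : ℕ) : ZMod d) :=
        cne (by omega) (by omega) (by omega)
      have hzhm : ((9 : ℕ) : ZMod d) ≠ ((d / 2 - 1 : ℕ) : ZMod d) :=
        cne (by omega) (by omega) (by omega)
      have hzhp : ((9 : ℕ) : ZMod d) ≠ ((d / 2 + 1 : ℕ) : ZMod d) :=
        cne (by omega) (by omega) (by omega)
      have hzhpp : ((9 : ℕ) : ZMod d) ≠ ((d / 2 + 2 : ℕ) : ZMod d) :=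
        cne (by omega) (by omega) (by omega)
      rw [hV, fv_generic _ hz0 hz2 hz1 hzm1 hzh hzhm hzhp hzhpp, hVh0,
        dvd_val_iff hed]
      rw [map_sub, map_sub, map_natCast, map_natCast]
      obtain ⟨t, ht⟩ := heh
      rw [ht]
      intro hcon
      have e31 : ((3 * t + 1 : ℕ) : ZMod 3) = 1 := by
        push_cast
        rw [show ((3 : ZMod 3)) = 0 from by decide]
        ring
      have e9 : ((9 : ℕ) : ZMod 3) = 0 := by decide
      have e2 : (ZMod.castHom hed (ZMod 3)) (2 : ZMod d) = 2 := map_ofNat _ 2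
      rw [e31, e9, e2] at hcon
      revert hcon; decide
    · -- e ∣ d/2, e ≠ 3, use z = d/2
      refine ⟨((d / 2 : ℕ) : ZMod d), by rw [ZMod.val_cast_of_lt (by omega)]; exact heh, ?_⟩
      rw [hV, fv_at_h hd8 h4, hVh0, dvd_val_iff hed]
      rw [map_sub, map_natCast]
      obtain ⟨t, ht⟩ := heh
      intro hcon
      have ehm : ((d / 2 - 1 : ℕ) : ZMod e) = -1 := by
        rw [Nat.cast_sub (by omega), ht]
        push_cast
        rw [ZMod.natCast_self]
        ring
      have e2 : (ZMod.castHom hed (ZMod e)) (2 : ZMod d) = 2 := map_ofNat _ 2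
      rw [ehm, e2] at hcon
      have h3 : ((3 : ℕ) : ZMod e) = 0 := by push_cast; linear_combination -hcon
      have he3' : e ∣ 3 := (ZMod.natCast_eq_zero_iff 3 e).mp h3
      have : e ≤ 3 := Nat.le_of_dvd (by omega) he3'
      interval_cases e
      · omega
      · exact he3 rfl
  · -- e does not divide d/2, use z = e
    have he2' : e ≠ 2 := fun h => heh (h ▸ (by omega : 2 ∣ d / 2))
    have hehalf : e ≠ d / 2 := fun h => heh (h ▸ dvd_rfl)
    have hehm : e ≠ d / 2 - 1 := by
      intro h
      have hdd : e + e + 2 = d := by omega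
      have h2' : e ∣ 2 := by
        have hdvd2 : e ∣ e + e + 2 := by rwa [hdd]
        exact (Nat.dvd_add_right (dvd_add dvd_rfl dvd_rfl)).mp hdvd2
      have := Nat.le_of_dvd (by omega) h2'
      omega
    refine ⟨((e : ℕ) : ZMod d), by rw [ZMod.val_cast_of_lt helt], ?_⟩
    have hz0 : ((e : ℕ) : ZMod d) ≠ 0 := by rw [← c0]; exact cne (by omega) (by omega) (by omega)
    have hz2 : ((e : ℕ) : ZMod d) ≠ 2 := by rw [← c2]; exact cne (by omega) (by omega) (by omega)
    have hz1 : ((e : ℕ) : ZMod d) ≠ 1 := by rw [← c1]; exact cne (by omega) (by omega) (by omega)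
    have hzm1 : ((e : ℕ) : ZMod d) ≠ ((d - 1 : ℕ) : ZMod d) :=
      cne (by omega) (by omega) (by omega)
    have hzh : ((e : ℕ) : ZMod d) ≠ ((d / 2 : ℕ) : ZMod d) :=
      cne (by omega) (by omega) (by omega)
    have hzhm : ((e : ℕ) : ZMod d) ≠ ((d / 2 - 1 : ℕ) : ZMod d) :=
      cne (by omega) (by omega) (by omega)
    have hzhp : ((e : ℕ) : ZMod d) ≠ ((d / 2 + 1 : ℕ) : ZMod d) :=
      cne (by omega) (by omega) (by omega)
    have hzhpp : ((e : ℕ) : ZMod d) ≠ ((d / 2 + 2 : ℕ) : ZMod d) :=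
      cne (by omega) (by omega) (by omega)
    rw [hV, fv_generic _ hz0 hz2 hz1 hzm1 hzh hzhm hzhp hzhpp, hVh0, dvd_val_iff hed]
    rw [map_sub, map_sub, map_natCast, map_natCast, ZMod.natCast_self]
    have e2 : (ZMod.castHom hed (ZMod e)) (2 : ZMod d) = 2 := map_ofNat _ 2
    rw [e2]
    intro hcon
    have hstep : ((d / 2 - 1 : ℕ) : ZMod e) = 0 := by
      push_cast at hcon
      rw [Nat.cast_sub (by omega)]
      push_cast
      linear_combination hcon
    have hdvd1 : e ∣ d / 2 - 1 := (ZMod.natCast_eq_zero_iff _ e).mp hstep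
    have h2' : e ∣ 2 := by
      have hsum : (d / 2 - 1) + (d / 2 - 1) + 2 = d := by omega
      have : e ∣ (d / 2 - 1) + (d / 2 - 1) + 2 := by rwa [hsum]
      exact (Nat.dvd_add_right (dvd_add hdvd1 hdvd1)).mp this
    have := Nat.le_of_dvd (by omega) h2'
    omega

end Vsec


/-! ### assembling the main construction -/

lemma ofFn_cons {α : Type*} {n : ℕ} (x : α) (f : Fin n → α) :
    List.ofFn (Fin.cons x f) = x :: List.ofFn f := by
  rw [List.ofFn_succ]
  simp [Fin.cons_zero, Fin.cons_succ]

theorem main_zmod (d s : ℕ) (hd : 4 < d) (hdeven : Even d) (hs : 2 < s)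
    (hparity : Even (s * (d / 2))) :
    ∃ (γ : Fin s → Perm (ZMod d)) (α : Perm (ZMod d)),
      (∀ i, (γ i) * (γ i) = 1 ∧ ∀ x : ZMod d, γ i x ≠ x) ∧
      α ^ 2 * (List.ofFn γ).prod = 1 ∧
      IsPretransitive (Subgroup.closure ({α} ∪ Set.range γ)) (ZMod d) ∧
      (∀ Λ : Set (ZMod d),
        IsBlock (Subgroup.closure ({α} ∪ Set.range γ)) Λ →
        IsTrivialBlock Λ) := by
  haveI : NeZero d := ⟨by omega⟩
  obtain ⟨dh, hdh⟩ := hdeven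
  have hd6 : 6 ≤ d := by omega
  have hd2 : 2 ∣ d := ⟨dh, by omega⟩
  rcases Nat.even_or_odd s with hse | hso
  · -- s even
    obtain ⟨t, ht⟩ := hse
    obtain ⟨k, hk⟩ : ∃ k, s = 2 * k + 4 := ⟨t - 2, by omega⟩
    subst hk
    haveI : Nonempty (Fin (2 * k + 2)) := ⟨⟨0, by omega⟩⟩
    set B : Perm (ZMod d) := Function.Involutive.toPerm (fB d) (fB_invol hd6) with hBdef
    have hBapp : ∀ x, B x = fB d x := fun x =>
      congrFun (Function.Involutive.coe_toPerm (fB_invol hd6)) x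
    have hBB : B * B = 1 := by
      ext x
      rw [Perm.mul_apply, hBapp, hBapp, Perm.one_apply]
      exact fB_invol hd6 x
    refine ⟨Fin.cons (pa d) (Fin.cons (pb d) (fun _ : Fin (2 * k + 2) => B)), cc d,
      ?_, ?_, ?_, ?_⟩
    · intro i
      refine Fin.cases ?_ (fun j => ?_) i
      · simp only [Fin.cons_zero]
        exact ⟨pa_invol, pa_fpf hd6 hd2⟩
      · simp only [Fin.cons_succ]
        refine Fin.cases ?_ (fun j2 => ?_) j
        · simp only [Fin.cons_zero]
          exact ⟨pb_invol, pb_fpf hd6 hd2⟩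
        · simp only [Fin.cons_succ]
          exact ⟨hBB, fun x => by rw [hBapp]; exact fB_fpf hd6 hd2 x⟩
    · rw [ofFn_cons, ofFn_cons, List.ofFn_const, List.prod_cons, List.prod_cons,
        List.prod_replicate, show 2 * k + 2 = 2 * (k + 1) by ring, pow_mul,
        show B ^ 2 = 1 by rw [sq, hBB], one_pow, mul_one]
      exact key_prod
    · exact transitive' _ (Subgroup.subset_closure (Or.inl rfl))
    · intro Λ hΛ
      refine blocks_trivial _ (Subgroup.subset_closure (Or.inl rfl)) B ?_
        (breaks_fB hd6 B hBapp) hΛ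
      apply Subgroup.subset_closure
      right
      rw [Fin.range_cons, Fin.range_cons, Set.range_const]
      simp
  · -- s odd
    obtain ⟨t, ht⟩ := hso
    obtain ⟨k, hk⟩ : ∃ k, s = 2 * k + 3 := ⟨t - 1, by omega⟩
    have hhev : Even (d / 2) := by
      rcases Nat.even_mul.mp hparity with h | h
      · exact absurd h (by rw [Nat.even_iff]; omega)
      · exact h
    have h4 : d % 4 = 0 := by obtain ⟨u, hu⟩ := hhev; omega
    have hd8 : 8 ≤ d := by omega
    subst hk
    set V : Perm (ZMod d) := Function.Involutive.toPerm (fv d) (fv_invol hd8 h4) with hVdef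
    have hVapp : ∀ x, V x = fv d x := fun x =>
      congrFun (Function.Involutive.coe_toPerm (fv_invol hd8 h4)) x
    have hVV : V * V = 1 := by
      ext x
      rw [Perm.mul_apply, hVapp, hVapp, Perm.one_apply]
      exact fv_invol hd8 h4 x
    have hWW : (V * pb d) * (V * pb d) = 1 := by
      ext x
      simp only [Perm.mul_apply, Perm.one_apply, hVapp, pb_apply]
      rw [fv_comm hd8 h4 x]
      have h1 : (1 : ZMod d) - (1 - fv d x) = fv d x := by ring
      rw [h1]
      exact fv_invol hd8 h4 x
    have hWfpf : ∀ x, (V * pb d) x ≠ x := by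
      intro x h
      rw [Perm.mul_apply, hVapp, pb_apply] at h
      have h2 := congrArg (fv d) h
      rw [fv_invol hd8 h4] at h2
      exact fv_ne_pb hd8 h4 x h2.symm
    refine ⟨Fin.cons (pa d) (Fin.cons V (Fin.cons (V * pb d)
      (fun _ : Fin (2 * k) => pa d))), cc d, ?_, ?_, ?_, ?_⟩
    · intro i
      refine Fin.cases ?_ (fun j => ?_) i
      · simp only [Fin.cons_zero]
        exact ⟨pa_invol, pa_fpf hd6 hd2⟩
      · simp only [Fin.cons_succ]
        refine Fin.cases ?_ (fun j2 => ?_) j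
        · simp only [Fin.cons_zero]
          exact ⟨hVV, fun x => by rw [hVapp]; exact fv_fpf hd8 h4 x⟩
        · simp only [Fin.cons_succ]
          refine Fin.cases ?_ (fun j3 => ?_) j2
          · simp only [Fin.cons_zero]
            exact ⟨hWW, hWfpf⟩
          · simp only [Fin.cons_succ]
            exact ⟨pa_invol, pa_fpf hd6 hd2⟩
    · rw [ofFn_cons, ofFn_cons, ofFn_cons, List.ofFn_const, List.prod_cons, List.prod_cons,
        List.prod_cons, List.prod_replicate, pow_mul,
        show pa d ^ 2 = 1 by rw [sq, pa_invol], one_pow, mul_one,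
        ← mul_assoc V V (pb d), hVV, one_mul]
      exact key_prod
    · exact transitive' _ (Subgroup.subset_closure (Or.inl rfl))
    · intro Λ hΛ
      refine blocks_trivial _ (Subgroup.subset_closure (Or.inl rfl)) V ?_
        (breaks_fv hd8 h4 V hVapp) hΛ
      apply Subgroup.subset_closure
      right
      rw [Fin.range_cons, Fin.range_cons, Fin.range_cons]
      simp

end ATD

/-- For even `d > 4` and `s > 2` with `s * (d / 2)` even, the branch datum consisting of `s`
copies of `[2,…,2]` is realizable by a transitive and primitive Hurwitz representation:
there are `s` fixed-point-free involutions `γ i` and a permutation `α` with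
`α² γ₁ ⋯ γ_s = 1` generating a transitive primitive subgroup. -/
theorem all_twos_datum_realizable_indecomposable
    (d s : ℕ) (hd : 4 < d) (hdeven : Even d) (hs : 2 < s)
    (hparity : Even (s * (d / 2))) :
    ∃ (γ : Fin s → Equiv.Perm (Fin d)) (α : Equiv.Perm (Fin d)),
      (∀ i, (γ i) * (γ i) = 1 ∧ ∀ x : Fin d, γ i x ≠ x) ∧
      α ^ 2 * (List.ofFn γ).prod = 1 ∧
      MulAction.IsPretransitive (Subgroup.closure ({α} ∪ Set.range γ)) (Fin d) ∧
      (∀ Λ : Set (Fin d),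
        MulAction.IsBlock (Subgroup.closure ({α} ∪ Set.range γ)) Λ →
        MulAction.IsTrivialBlock Λ) := by
  obtain ⟨n, rfl⟩ : ∃ n, d = n + 1 := ⟨d - 1, by omega⟩
  exact ATD.main_zmod (n + 1) s hd hdeven hs hparity
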